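/- Let m ≥ 3 and let K = {(i_1,i_2), (i_2,i_3), ..., (i_{ℓ-1},i_ℓ), (i_ℓ,i_1)} be any directed cycle on pairwise distinct vertices i_1,...,i_ℓ ∈ V with 1 < ℓ = |K| < m. Then the subtour elimination inequality ∑_{(i,j) ∈ K} z_{i,j} ≤ |K| - 1 is valid for the cycle clustering polytope CCP(n,m); equivalently, for every surjective map κ : V → ZMod m, it is impossible that κ(i_{t+1}) = κ(i_t) + 1 for all t = 1,...,ℓ (indices cyclic). -/

import Mathlib

open scoped BigOperators

noncomputable section

/-- Coordinate index set for the incidence vectors of cycle clusterings: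
`x`-variables indexed by `(i,s)`, `y`-variables indexed by pairs `i < j`,
and `z`-variables indexed by arcs `i ≠ j`. -/
abbrev CCIdx (n m : ℕ) : Type :=
  (Fin n × ZMod m) ⊕ {p : Fin n × Fin n // p.1 < p.2} ⊕ {p : Fin n × Fin n // p.1 ≠ p.2}

/-- Index of the variable `x_{i,s}`. -/
def xIdx {n m : ℕ} (i : Fin n) (s : ZMod m) : CCIdx n m := Sum.inl (i, s)

/-- Index of the variable `y_{i,j}` (with the convention `y_{i,j} = y_{j,i}`). -/
def yIdx {n m : ℕ} (i j : Fin n) (h : i ≠ j) : CCIdx n m :=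
  if hij : i < j then Sum.inr (Sum.inl ⟨(i, j), hij⟩)
  else Sum.inr (Sum.inl ⟨(j, i), lt_of_le_of_ne (not_lt.mp hij) h.symm⟩)

/-- Index of the variable `z_{i,j}`. -/
def zIdx {n m : ℕ} (i j : Fin n) (h : i ≠ j) : CCIdx n m := Sum.inr (Sum.inr ⟨(i, j), h⟩)

/-- Incidence vector of a clustering `κ : V → ZMod m`:
`x_{i,s} = 1` iff `κ i = s`, `y_{i,j} = 1` iff `κ i = κ j`,
`z_{i,j} = 1` iff `κ j = κ i + 1`. -/
def incVec {n m : ℕ} (κ : Fin n → ZMod m) : CCIdx n m → ℝ :=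
  Sum.elim (fun p => if κ p.1 = p.2 then 1 else 0)
    (Sum.elim (fun p => if κ p.val.1 = κ p.val.2 then 1 else 0)
      (fun p => if κ p.val.2 = κ p.val.1 + 1 then 1 else 0))

/-- The cycle clustering polytope `CCP(n,m)`: the convex hull of the incidence
vectors of all feasible clusterings, i.e. all surjective maps `κ : V → ZMod m`. -/
def CCP (n m : ℕ) : Set (CCIdx n m → ℝ) :=
  convexHull ℝ {v | ∃ κ : Fin n → ZMod m, Function.Surjective κ ∧ v = incVec κ}

/-- The `x_{i,s}`-coordinate of a point. -/
def Xc {n m : ℕ} (v : CCIdx n m → ℝ) (i : Fin n) (s : ZMod m) : ℝ := v (xIdx i s)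

/-- The `y_{i,j}`-coordinate of a point (junk value `0` on the diagonal). -/
def Yc {n m : ℕ} (v : CCIdx n m → ℝ) (i j : Fin n) : ℝ :=
  if h : i ≠ j then v (yIdx i j h) else 0

/-- The `z_{i,j}`-coordinate of a point (junk value `0` on the diagonal). -/
def Zc {n m : ℕ} (v : CCIdx n m → ℝ) (i j : Fin n) : ℝ :=
  if h : i ≠ j then v (zIdx i j h) else 0

/-- The dimension of (the affine hull of) `CCP(n,m)`. -/
def ccpDim (n m : ℕ) : ℕ :=
  Module.finrank ℝ (affineSpan ℝ (CCP n m)).direction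

/-- For `m ≥ 3` and a directed cycle `(c 0, c 1), …, (c (ℓ-1), c 0)` on pairwise
distinct vertices with `1 < ℓ < m`, the subtour elimination inequality
`∑_{(i,j)∈K} z_{i,j} ≤ |K| - 1` is valid for `CCP(n,m)`; equivalently, for
every surjective `κ : V → ZMod m` it is impossible that
`κ (c (t+1)) = κ (c t) + 1` for all `t` (indices cyclic). -/
theorem subtour_inequality (n m ℓ : ℕ) (hm : 3 ≤ m) (hℓ : 1 < ℓ) (hℓm : ℓ < m)
    (c : ℕ → Fin n) (hinj : ∀ t₁ < ℓ, ∀ t₂ < ℓ, c t₁ = c t₂ → t₁ = t₂) :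
    (∀ v ∈ CCP n m,
      ∑ t ∈ Finset.range ℓ, Zc v (c t) (c ((t + 1) % ℓ)) ≤ (ℓ : ℝ) - 1) ∧
    (∀ κ : Fin n → ZMod m, Function.Surjective κ →
      ¬ (∀ t < ℓ, κ (c ((t + 1) % ℓ)) = κ (c t) + 1)) :=  by
  haveI : NeZero m := ⟨by omega⟩
  have part2 : ∀ κ : Fin n → ZMod m,
      ¬ (∀ t < ℓ, κ (c ((t + 1) % ℓ)) = κ (c t) + 1) := by
    intro κ hκ
    have key : ∀ t ≤ ℓ, κ (c (t % ℓ)) = κ (c 0) + (t : ZMod m) := by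
      intro t ht
      induction t with
      | zero => simp
      | succ k ih =>
        have hk : k < ℓ := by omega
        have ihk := ih (by omega)
        rw [Nat.mod_eq_of_lt hk] at ihk
        rw [hκ k hk, ihk]
        push_cast; ring
    have h0 := key ℓ le_rfl
    rw [Nat.mod_self] at h0
    have hz : (ℓ : ZMod m) = 0 := by
      have := left_eq_add.mp h0
      exact this
    have hdvd : m ∣ ℓ := (ZMod.natCast_eq_zero_iff ℓ m).mp hz
    have := Nat.le_of_dvd (by omega) hdvd
    omega
  refine ⟨?_, fun κ _ => part2 κ⟩
  intro v hv
  have hconv : Convex ℝ {w : CCIdx n m → ℝ |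
      ∑ t ∈ Finset.range ℓ, Zc w (c t) (c ((t + 1) % ℓ)) ≤ (ℓ : ℝ) - 1} := by
    intro p hp q hq a b ha hb hab
    have hlin : ∀ i j : Fin n, Zc (a • p + b • q) i j = a * Zc p i j + b * Zc q i j := by
      intro i j
      unfold Zc
      split
      · simp [mul_comm]
      · ring
    simp only [Set.mem_setOf_eq] at hp hq ⊢
    calc ∑ t ∈ Finset.range ℓ, Zc (a • p + b • q) (c t) (c ((t + 1) % ℓ))
        = a * ∑ t ∈ Finset.range ℓ, Zc p (c t) (c ((t + 1) % ℓ))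
          + b * ∑ t ∈ Finset.range ℓ, Zc q (c t) (c ((t + 1) % ℓ)) := by
          simp only [hlin, Finset.sum_add_distrib, Finset.mul_sum]
      _ ≤ a * ((ℓ : ℝ) - 1) + b * ((ℓ : ℝ) - 1) := by
          gcongr
      _ = (ℓ : ℝ) - 1 := by nlinarith
  refine convexHull_min ?_ hconv hv
  rintro w ⟨κ, hκs, rfl⟩
  simp only [Set.mem_setOf_eq]
  have hzc : ∀ t < ℓ, Zc (incVec κ) (c t) (c ((t + 1) % ℓ)) =
      if κ (c ((t + 1) % ℓ)) = κ (c t) + 1 then 1 else 0 := by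
    intro t ht
    have hne : c t ≠ c ((t + 1) % ℓ) := by
      intro h
      have h1 : (t + 1) % ℓ < ℓ := Nat.mod_lt _ (by omega)
      have heq := hinj t ht _ h1 h
      rcases Nat.lt_or_ge (t + 1) ℓ with h2 | h2
      · rw [Nat.mod_eq_of_lt h2] at heq; omega
      · have h3 : t + 1 = ℓ := by omega
        rw [h3, Nat.mod_self] at heq; omega
    simp [Zc, hne, zIdx, incVec]
  obtain ⟨t₀, ht₀, hbad⟩ : ∃ t < ℓ, ¬ κ (c ((t + 1) % ℓ)) = κ (c t) + 1 := by
    by_contra h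
    push_neg at h
    exact part2 κ h
  have ht₀' : t₀ ∈ Finset.range ℓ := Finset.mem_range.mpr ht₀
  rw [← Finset.add_sum_erase _ _ ht₀']
  have hterm : Zc (incVec κ) (c t₀) (c ((t₀ + 1) % ℓ)) = 0 := by
    rw [hzc t₀ ht₀, if_neg hbad]
  rw [hterm, zero_add]
  have hbound : ∑ t ∈ (Finset.range ℓ).erase t₀,
      Zc (incVec κ) (c t) (c ((t + 1) % ℓ)) ≤ ((Finset.range ℓ).erase t₀).card • (1 : ℝ) := by
    apply Finset.sum_le_card_nsmul
    intro t ht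
    have htl : t < ℓ := Finset.mem_range.mp (Finset.mem_of_mem_erase ht)
    rw [hzc t htl]
    split <;> norm_num
  have hcard : ((Finset.range ℓ).erase t₀).card = ℓ - 1 := by
    rw [Finset.card_erase_of_mem ht₀', Finset.card_range]
  rw [hcard] at hbound
  calc _ ≤ ((ℓ - 1 : ℕ) : ℝ) := by simpa using hbound
    _ ≤ (ℓ : ℝ) - 1 := by
        have : (1 : ℕ) ≤ ℓ := by omega
        push_cast [Nat.cast_sub this]
        linarith


end
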